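/- Let 𝓑 be a generalized Boolean algebra and 𝓐(𝓑) = closed span{χ_A : A ∈ 𝓑} ⊆ C₀(𝓑̂). The map 𝓙 ↦ K_𝓙 := closed span{χ_A : A ∈ 𝓙} is a bijection between the set of ideals of the Boolean algebra 𝓑 and the set of closed ideals of the C*-algebra 𝓐(𝓑), with inverse K ↦ 𝓙_K := {A ∈ 𝓑 : χ_A ∈ K}. -/

import Mathlib

open scoped ZeroAtInfty
open Filter Topology

/-- The character space 𝓑̂ of a generalized Boolean algebra 𝓑: the space of ultrafilters
of 𝓑, realized as the nonzero Boolean characters 𝓑 → Bool, with the topology of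
pointwise convergence. -/
abbrev BoolCharSpace (B : Type*) [GeneralizedBooleanAlgebra B] : Type _ :=
  {φ : B → Bool // (∀ a b, φ (a ⊓ b) = (φ a && φ b)) ∧ (∀ a b, φ (a ⊔ b) = (φ a || φ b)) ∧
    (∀ a b, φ (a \ b) = (φ a && !φ b)) ∧ φ ⊥ = false ∧ ∃ a, φ a = true}

variable {B : Type*} [GeneralizedBooleanAlgebra B]

theorem isCompact_cylinder (A : B) :
    IsCompact {φ : BoolCharSpace B | φ.1 A = true} := by
  rw [Subtype.isCompact_iff]
  set K : Set (B → Bool) :=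
    {φ | ((∀ a b, φ (a ⊓ b) = (φ a && φ b)) ∧ (∀ a b, φ (a ⊔ b) = (φ a || φ b)) ∧
      (∀ a b, φ (a \ b) = (φ a && !φ b)) ∧ φ ⊥ = false) ∧ φ A = true} with hK
  have himg : Subtype.val '' {φ : BoolCharSpace B | φ.1 A = true} = K := by
    ext φ
    constructor
    · rintro ⟨ψ, hψ, rfl⟩
      exact ⟨⟨ψ.2.1, ψ.2.2.1, ψ.2.2.2.1, ψ.2.2.2.2.1⟩, hψ⟩
    · rintro ⟨⟨h1, h2, h3, h4⟩, h5⟩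
      exact ⟨⟨φ, h1, h2, h3, h4, ⟨A, h5⟩⟩, h5, rfl⟩
  rw [himg]
  have c1 : IsClosed {φ : B → Bool | ∀ a b, φ (a ⊓ b) = (φ a && φ b)} := by
    have he : {φ : B → Bool | ∀ a b, φ (a ⊓ b) = (φ a && φ b)} =
        ⋂ (a : B), ⋂ (b : B), {φ : B → Bool | φ (a ⊓ b) = (φ a && φ b)} := by
      ext φ; simp
    rw [he]
    refine isClosed_iInter fun a => isClosed_iInter fun b => ?_
    have hcont : Continuous ((fun p : Bool × Bool => p.1 && p.2) ∘ fun φ : B → Bool => (φ a, φ b)) :=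
      Continuous.comp continuous_of_discreteTopology
        ((continuous_apply a).prodMk (continuous_apply b))
    exact isClosed_eq (continuous_apply _) hcont
  have c2 : IsClosed {φ : B → Bool | ∀ a b, φ (a ⊔ b) = (φ a || φ b)} := by
    have he : {φ : B → Bool | ∀ a b, φ (a ⊔ b) = (φ a || φ b)} =
        ⋂ (a : B), ⋂ (b : B), {φ : B → Bool | φ (a ⊔ b) = (φ a || φ b)} := by
      ext φ; simp
    rw [he]
    refine isClosed_iInter fun a => isClosed_iInter fun b => ?_
    have hcont : Continuous ((fun p : Bool × Bool => p.1 || p.2) ∘ fun φ : B → Bool => (φ a, φ b)) :=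
      Continuous.comp continuous_of_discreteTopology
        ((continuous_apply a).prodMk (continuous_apply b))
    exact isClosed_eq (continuous_apply _) hcont
  have c3 : IsClosed {φ : B → Bool | ∀ a b, φ (a \ b) = (φ a && !φ b)} := by
    have he : {φ : B → Bool | ∀ a b, φ (a \ b) = (φ a && !φ b)} =
        ⋂ (a : B), ⋂ (b : B), {φ : B → Bool | φ (a \ b) = (φ a && !φ b)} := by
      ext φ; simp
    rw [he]
    refine isClosed_iInter fun a => isClosed_iInter fun b => ?_
    have hcont : Continuous ((fun p : Bool × Bool => p.1 && !p.2) ∘ fun φ : B → Bool => (φ a, φ b)) :=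
      Continuous.comp continuous_of_discreteTopology
        ((continuous_apply a).prodMk (continuous_apply b))
    exact isClosed_eq (continuous_apply _) hcont
  have c4 : IsClosed {φ : B → Bool | φ ⊥ = false} :=
    isClosed_eq (continuous_apply _) continuous_const
  have c5 : IsClosed {φ : B → Bool | φ A = true} :=
    isClosed_eq (continuous_apply _) continuous_const
  have hKeq : K = ({φ : B → Bool | ∀ a b, φ (a ⊓ b) = (φ a && φ b)} ∩
      {φ | ∀ a b, φ (a ⊔ b) = (φ a || φ b)} ∩ {φ | ∀ a b, φ (a \ b) = (φ a && !φ b)} ∩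
      {φ | φ ⊥ = false}) ∩ {φ | φ A = true} := by
    ext φ
    simp only [hK, Set.mem_setOf_eq, Set.mem_inter_iff]
    tauto
  have hclosed : IsClosed K := by
    rw [hKeq]
    exact ((((c1.inter c2).inter c3).inter c4)).inter c5
  exact hclosed.isCompact

/-- χ_A = 1_{Z(A)} ∈ C₀(𝓑̂): the characteristic function of the compact open
cylinder set Z(A) = {φ ∈ 𝓑̂ : φ(A) = 1}. -/
noncomputable def chi (A : B) : C₀(BoolCharSpace B, ℂ) where
  toFun φ := if φ.1 A then 1 else 0
  continuous_toFun :=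
    (continuous_of_discreteTopology (f := fun t : Bool => if t then (1 : ℂ) else 0)).comp
      ((continuous_apply A).comp continuous_subtype_val)
  zero_at_infty' := by
    refine HasCompactSupport.is_zero_at_infty ?_
    refine HasCompactSupport.intro (isCompact_cylinder A) ?_
    intro φ hφ
    simp only [Set.mem_setOf_eq] at hφ
    simp [hφ]

/-- An ideal of a (generalized) Boolean algebra: a nonempty subset closed under
binary unions and under intersection with arbitrary elements. -/
def BoolIdeal {B : Type*} [GeneralizedBooleanAlgebra B] (I : Set B) : Prop :=
  I.Nonempty ∧ (∀ a ∈ I, ∀ b ∈ I, a ⊔ b ∈ I) ∧ (∀ a ∈ I, ∀ b : B, a ⊓ b ∈ I)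

/-- 𝓐(𝓑) = closed span{χ_A : A ∈ 𝓑} ⊆ C₀(𝓑̂). -/
noncomputable def boolAlgebraOfChars (B : Type*) [GeneralizedBooleanAlgebra B] :
    Set C₀(BoolCharSpace B, ℂ) :=
  closure (Submodule.span ℂ (Set.range (chi (B := B))) : Set C₀(BoolCharSpace B, ℂ))

/-- A closed ideal of the C*-algebra 𝓐(𝓑). -/
def IsClosedIdealOfA {B : Type*} [GeneralizedBooleanAlgebra B]
    (K : Set C₀(BoolCharSpace B, ℂ)) : Prop :=
  K ⊆ boolAlgebraOfChars B ∧ IsClosed K ∧ (0 : C₀(BoolCharSpace B, ℂ)) ∈ K ∧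
    (∀ f ∈ K, ∀ g ∈ K, f + g ∈ K) ∧ (∀ c : ℂ, ∀ f ∈ K, c • f ∈ K) ∧
    (∀ f ∈ K, ∀ g ∈ boolAlgebraOfChars B, f * g ∈ K ∧ g * f ∈ K)


section Lemmas
variable {B : Type*} [GeneralizedBooleanAlgebra B]

lemma chi_apply (A : B) (φ : BoolCharSpace B) : chi A φ = if φ.1 A then 1 else 0 := rfl

lemma chi_bot : chi (⊥ : B) = 0 := by
  ext φ; simp [chi_apply, φ.2.2.2.2.1]

lemma chi_mul (A C : B) : chi A * chi C = chi (A ⊓ C) := by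
  ext φ
  simp only [ZeroAtInftyContinuousMap.coe_mul, Pi.mul_apply, chi_apply, φ.2.1 A C]
  cases h1 : φ.1 A <;> cases h2 : φ.1 C <;> simp

lemma chi_sup (A C : B) : chi (A ⊔ C) = chi A + chi C - chi (A ⊓ C) := by
  ext φ
  simp only [ZeroAtInftyContinuousMap.coe_sub, ZeroAtInftyContinuousMap.coe_add, Pi.sub_apply,
    Pi.add_apply, chi_apply, φ.2.1 A C, φ.2.2.1 A C]
  cases h1 : φ.1 A <;> cases h2 : φ.1 C <;> simp

lemma chi_add_disjoint {A C : B} (h : A ⊓ C = ⊥) : chi (A ⊔ C) = chi A + chi C := by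
  rw [chi_sup, h, chi_bot, sub_zero]

lemma norm_chi_le (A : B) : ‖chi A‖ ≤ 1 := by
  rw [← ZeroAtInftyContinuousMap.norm_toBCF_eq_norm]
  refine (BoundedContinuousFunction.norm_le zero_le_one).2 fun φ => ?_
  show ‖chi A φ‖ ≤ 1
  rw [chi_apply]; split <;> simp

lemma BoolIdeal.bot_mem {I : Set B} (hI : BoolIdeal I) : (⊥ : B) ∈ I := by
  obtain ⟨a, ha⟩ := hI.1
  simpa using hI.2.2 a ha ⊥

lemma BoolIdeal.mem_of_le {I : Set B} (hI : BoolIdeal I) {a b : B} (hb : b ∈ I) (h : a ≤ b) :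
    a ∈ I := by
  have := hI.2.2 b hb a
  rwa [inf_eq_right.2 h] at this

/-- Separation: if `A ∉ J` for an ideal `J`, there is a character true on `A`, false on `J`. -/
lemma exists_char {J : Set B} (hJ : BoolIdeal J) {A : B} (hA : A ∉ J) :
    ∃ φ : B → Bool, ((∀ a b, φ (a ⊓ b) = (φ a && φ b)) ∧ (∀ a b, φ (a ⊔ b) = (φ a || φ b)) ∧
      (∀ a b, φ (a \ b) = (φ a && !φ b)) ∧ φ ⊥ = false ∧ ∃ a, φ a = true) ∧
      φ A = true ∧ ∀ C ∈ J, φ C = false := by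
  classical
  set S : Set (Set B) := {I | BoolIdeal I ∧ J ⊆ I ∧ A ∉ I} with hS
  have hJS : J ∈ S := ⟨hJ, subset_rfl, hA⟩
  obtain ⟨M, -, hMS, hMmax⟩ := zorn_subset_nonempty S (fun c hcS hc hcne => by
    refine ⟨⋃₀ c, ⟨⟨?_, ?_, ?_⟩, ?_, ?_⟩, fun s hs => Set.subset_sUnion_of_mem hs⟩
    · obtain ⟨I, hI⟩ := hcne
      obtain ⟨a, ha⟩ := (hcS hI).1.1
      exact ⟨a, I, hI, ha⟩
    · rintro a ⟨I1, hI1, ha⟩ b ⟨I2, hI2, hb⟩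
      rcases hc.total hI1 hI2 with h | h
      · exact ⟨I2, hI2, (hcS hI2).1.2.1 a (h ha) b hb⟩
      · exact ⟨I1, hI1, (hcS hI1).1.2.1 a ha b (h hb)⟩
    · rintro a ⟨I1, hI1, ha⟩ b
      exact ⟨I1, hI1, (hcS hI1).1.2.2 a ha b⟩
    · obtain ⟨I, hI⟩ := hcne
      exact (hcS hI).2.1.trans (Set.subset_sUnion_of_mem hI)
    · rintro ⟨I, hI, hAI⟩
      exact (hcS hI).2.2 hAI) J hJS
  obtain ⟨hM, hJM, hAM⟩ := hMS
  have hmax : ∀ I ∈ S, M ⊆ I → I ⊆ M := fun I hI hMI => hMmax hI hMI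
  -- M is prime
  have hprime : ∀ x y : B, x ⊓ y ∈ M → x ∈ M ∨ y ∈ M := by
    intro x y hxy
    by_contra hcon
    push_neg at hcon
    obtain ⟨hx, hy⟩ := hcon
    have key : ∀ z : B, z ∉ M → ∃ m ∈ M, A ≤ m ⊔ z := by
      intro z hz
      set Iz : Set B := {w | ∃ m ∈ M, w ≤ m ⊔ z} with hIz
      have hIzIdeal : BoolIdeal Iz := by
        refine ⟨⟨z, ⊥, hM.bot_mem, by simp⟩, ?_, ?_⟩
        · rintro a ⟨m1, hm1, ha⟩ b ⟨m2, hm2, hb⟩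
          exact ⟨m1 ⊔ m2, hM.2.1 m1 hm1 m2 hm2,
            sup_le (ha.trans (sup_le_sup_right le_sup_left z))
              (hb.trans (sup_le_sup_right le_sup_right z))⟩
        · rintro a ⟨m1, hm1, ha⟩ b
          exact ⟨m1, hm1, le_trans inf_le_left ha⟩
      have hMIz : M ⊆ Iz := fun m hm => ⟨m, hm, le_sup_left⟩
      have hAIz : A ∈ Iz := by
        by_contra hAIz
        have : Iz ⊆ M := hmax Iz ⟨hIzIdeal, hJM.trans hMIz, hAIz⟩ hMIz
        exact hz (this ⟨⊥, hM.bot_mem, by simp⟩)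
      exact hAIz
    obtain ⟨m, hm, hAm⟩ := key x hx
    obtain ⟨n, hn, hAn⟩ := key y hy
    have hle : A ≤ (n ⊔ m) ⊔ x ⊓ y := by
      have h1 : A ≤ (m ⊔ x) ⊓ (n ⊔ y) := le_inf hAm hAn
      have h2 : (m ⊔ x) ⊓ (n ⊔ y) ≤ (n ⊔ m) ⊔ x ⊓ y := by
        rw [inf_sup_left, inf_sup_right, inf_sup_right]
        refine sup_le (sup_le ?_ ?_) (sup_le ?_ ?_) <;>
          first
          | exact le_sup_right
          | exact le_trans inf_le_right (le_sup_of_le_left le_sup_left)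
          | exact le_trans inf_le_left (le_sup_of_le_left le_sup_right)
      exact h1.trans h2
    exact hAM (hM.mem_of_le (hM.2.1 _ (hM.2.1 n hn m hm) _ hxy) hle)
  -- membership helper facts
  have hinf_l : ∀ x y : B, x ∈ M → x ⊓ y ∈ M := fun x y hx => hM.2.2 x hx y
  have hinf_r : ∀ x y : B, y ∈ M → x ⊓ y ∈ M := fun x y hy =>
    hM.mem_of_le hy inf_le_right
  have hsd : ∀ x y : B, x \ y ∈ M ↔ (x ∈ M ∨ y ∉ M) := by
    intro x y
    constructor
    · intro h
      by_cases hy : y ∈ M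
      · left
        have : x ⊓ y ⊔ x \ y ∈ M := hM.2.1 _ (hinf_r x y hy) _ h
        rwa [sup_inf_sdiff] at this
      · exact Or.inr hy
    · rintro (hx | hy)
      · exact hM.mem_of_le hx sdiff_le
      · rcases hprime (x \ y) y (by
          have hb : x \ y ⊓ y = ⊥ := by simp
          rw [hb]; exact hM.bot_mem) with h | h
        · exact h
        · exact absurd h hy
  refine ⟨fun x => !(decide (x ∈ M)), ⟨?_, ?_, ?_, ?_, ⟨A, by simp [hAM]⟩⟩, by simp [hAM],
    fun C hC => by simp [hJM hC]⟩
  · intro x y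
    by_cases hx : x ∈ M <;> by_cases hy : y ∈ M
    · simp [hx, hy, hinf_l x y hx]
    · simp [hx, hy, hinf_l x y hx]
    · simp [hx, hy, hinf_r x y hy]
    · have : x ⊓ y ∉ M := fun h => (hprime x y h).elim hx hy
      simp [hx, hy, this]
  · intro x y
    by_cases hx : x ∈ M <;> by_cases hy : y ∈ M
    · simp [hx, hy, hM.2.1 x hx y hy]
    · have h1 : x ⊔ y ∉ M := fun h => hy (hM.mem_of_le h le_sup_right)
      simp [hx, hy, h1]
    · have h1 : x ⊔ y ∉ M := fun h => hx (hM.mem_of_le h le_sup_left)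
      simp [hx, hy, h1]
    · have h1 : x ⊔ y ∉ M := fun h => hx (hM.mem_of_le h le_sup_left)
      simp [hx, hy, h1]
  · intro x y
    by_cases hx : x ∈ M <;> by_cases hy : y ∈ M
    · simp [hx, hy, (hsd x y).2 (Or.inl hx)]
    · simp [hx, hy, (hsd x y).2 (Or.inl hx)]
    · have h1 : x \ y ∉ M := fun h => ((hsd x y).1 h).elim hx (fun h' => h' hy)
      simp [hx, hy, h1]
    · simp [hx, hy, (hsd x y).2 (Or.inr hy)]
  · simp [hM.bot_mem]

/-! ### Analytic lemmas -/

open ZeroAtInftyContinuousMap in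
lemma closure_span_mapsto {s : Set C₀(BoolCharSpace B, ℂ)}
    (L : C₀(BoolCharSpace B, ℂ) →L[ℂ] C₀(BoolCharSpace B, ℂ))
    (N : Submodule ℂ C₀(BoolCharSpace B, ℂ)) (hN : IsClosed (N : Set C₀(BoolCharSpace B, ℂ)))
    (h : ∀ x ∈ s, L x ∈ N) {f : C₀(BoolCharSpace B, ℂ)}
    (hf : f ∈ closure (Submodule.span ℂ s : Set C₀(BoolCharSpace B, ℂ))) : L f ∈ N := by
  have h1 : (Submodule.span ℂ s : Set C₀(BoolCharSpace B, ℂ)) ⊆ L ⁻¹' (N : Set _) := by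
    have := Submodule.span_le (R := ℂ) (s := s) (p := N.comap (L : _ →ₗ[ℂ] _))
    exact fun x hx => (this.2 h) hx
  exact closure_minimal h1 (hN.preimage L.continuous) hf

lemma isClosed_closure_span (S : Set B) :
    IsClosed (closure (Submodule.span ℂ (chi '' S) : Set C₀(BoolCharSpace B, ℂ))) :=
  isClosed_closure

lemma closure_span_eq_topClosure (S : Set B) :
    closure (Submodule.span ℂ (chi '' S) : Set C₀(BoolCharSpace B, ℂ)) =
      ((Submodule.span ℂ (chi '' S)).topologicalClosure : Set C₀(BoolCharSpace B, ℂ)) :=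
  (Submodule.topologicalClosure_coe _).symm

lemma mul_mem_closure_span {S T U : Set B}
    (h : ∀ A ∈ S, ∀ C ∈ T, A ⊓ C ∈ U) {f g : C₀(BoolCharSpace B, ℂ)}
    (hf : f ∈ closure (Submodule.span ℂ (chi '' S) : Set C₀(BoolCharSpace B, ℂ)))
    (hg : g ∈ closure (Submodule.span ℂ (chi '' T) : Set C₀(BoolCharSpace B, ℂ))) :
    f * g ∈ closure (Submodule.span ℂ (chi '' U) : Set C₀(BoolCharSpace B, ℂ)) := by
  set MU := (Submodule.span ℂ (chi '' U)).topologicalClosure with hMU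
  have hMUc : IsClosed (MU : Set C₀(BoolCharSpace B, ℂ)) := Submodule.isClosed_topologicalClosure _
  rw [closure_span_eq_topClosure]
  -- step A : for A ∈ S, chi A * g ∈ MU
  have stepA : ∀ A ∈ S, chi A * g ∈ MU := by
    intro A hA
    refine closure_span_mapsto (ContinuousLinearMap.mul ℂ C₀(BoolCharSpace B, ℂ) (chi A))
      MU hMUc ?_ hg
    rintro x ⟨C, hC, rfl⟩
    show chi A * chi C ∈ MU
    rw [chi_mul]
    exact Submodule.le_topologicalClosure _ (Submodule.subset_span ⟨A ⊓ C, h A hA C hC, rfl⟩)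
  -- step B : conclude
  refine closure_span_mapsto ((ContinuousLinearMap.mul ℂ C₀(BoolCharSpace B, ℂ)).flip g)
    MU hMUc ?_ hf
  rintro x ⟨A, hA, rfl⟩
  exact stepA A hA

lemma chi_not_mem_closure_span {J : Set B} (hJ : BoolIdeal J) {A : B} (hA : A ∉ J) :
    chi A ∉ closure (Submodule.span ℂ (chi '' J) : Set C₀(BoolCharSpace B, ℂ)) := by
  obtain ⟨φ0, hchar, hAt, hJf⟩ := exists_char hJ hA
  set φ : BoolCharSpace B := ⟨φ0, hchar⟩ with hφ
  have hev : Continuous fun f : C₀(BoolCharSpace B, ℂ) => f φ := by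
    have h1 : Continuous fun f : C₀(BoolCharSpace B, ℂ) => f.toBCF :=
      ZeroAtInftyContinuousMap.isometry_toBCF.continuous
    exact (BoundedContinuousFunction.evalCLM (𝕜 := ℂ) φ).continuous.comp h1
  set evalLM : C₀(BoolCharSpace B, ℂ) →ₗ[ℂ] ℂ :=
    { toFun := fun f => f φ
      map_add' := fun f g => rfl
      map_smul' := fun c f => rfl } with hevalLM
  have hker : closure (Submodule.span ℂ (chi '' J) : Set C₀(BoolCharSpace B, ℂ)) ⊆
      {f : C₀(BoolCharSpace B, ℂ) | f φ = 0} := by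
    refine closure_minimal ?_ (isClosed_eq hev continuous_const)
    have hle := (Submodule.span_le (R := ℂ) (s := chi '' J) (p := LinearMap.ker evalLM)).2 ?_
    · exact fun x hx => hle hx
    · rintro x ⟨C, hC, rfl⟩
      show chi C φ = 0
      rw [chi_apply]
      simp [hφ, hJf C hC]
  intro hmem
  have h0 : chi A φ = 0 := hker hmem
  rw [chi_apply] at h0
  simp [hφ, hAt] at h0

lemma boolAlgebraOfChars_eq :
    boolAlgebraOfChars B = closure (Submodule.span ℂ (chi '' (Set.univ : Set B))
      : Set C₀(BoolCharSpace B, ℂ)) := by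
  rw [boolAlgebraOfChars, Set.image_univ]

/-! ### List machinery -/

/-- Sum of a list of scaled characteristic functions. -/
noncomputable def lsum (l : List (ℂ × B)) : C₀(BoolCharSpace B, ℂ) :=
  (l.map fun p => p.1 • chi p.2).sum

lemma lsum_nil : lsum ([] : List (ℂ × B)) = 0 := rfl

lemma lsum_cons (p : ℂ × B) (l : List (ℂ × B)) :
    lsum (p :: l) = p.1 • chi p.2 + lsum l := by
  simp [lsum]

lemma le_foldr_sup {l : List B} {x : B} (h : x ∈ l) : x ≤ l.foldr (· ⊔ ·) ⊥ := by
  induction l with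
  | nil => simp at h
  | cons y t ih =>
    rcases List.mem_cons.1 h with rfl | h
    · exact le_sup_left
    · exact (ih h).trans le_sup_right

lemma inf_foldr_bot {l : List B} {x : B} (h : ∀ y ∈ l, x ⊓ y = ⊥) :
    x ⊓ l.foldr (· ⊔ ·) ⊥ = ⊥ := by
  induction l with
  | nil => simp
  | cons y t ih =>
    simp only [List.foldr_cons, inf_sup_left]
    rw [h y List.mem_cons_self, ih (fun z hz => h z (List.mem_cons_of_mem y hz))]
    simp

lemma chi_foldr {l : List B} (hl : l.Pairwise (fun x y => x ⊓ y = ⊥)) :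
    chi (l.foldr (· ⊔ ·) ⊥) = (l.map chi).sum := by
  induction l with
  | nil => simpa using chi_bot
  | cons x t ih =>
    rw [List.foldr_cons, chi_add_disjoint (inf_foldr_bot (List.pairwise_cons.1 hl).1),
      List.map_cons, List.sum_cons, ih (List.pairwise_cons.1 hl).2]

lemma chi_split (x A : B) : chi x = chi (x ⊓ A) + chi (x \ A) := by
  rw [← chi_add_disjoint (inf_inf_sdiff x A), sup_inf_sdiff]

lemma chi_mul_lsum_eq_zero {l : List (ℂ × B)} {x : B}
    (h : ∀ p ∈ l, x ⊓ p.2 = ⊥) : chi x * lsum l = 0 := by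
  induction l with
  | nil => simp [lsum_nil]
  | cons p t ih =>
    rw [lsum_cons, mul_add, mul_smul_comm, chi_mul, h p List.mem_cons_self, chi_bot,
      ih (fun q hq => h q (List.mem_cons_of_mem p hq))]
    simp

lemma chi_mul_lsum {l : List (ℂ × B)}
    (hl : (l.map Prod.snd).Pairwise (fun x y => x ⊓ y = ⊥)) {c : ℂ} {x : B}
    (hmem : (c, x) ∈ l) : chi x * lsum l = c • chi x := by
  induction l with
  | nil => simp at hmem
  | cons p t ih =>
    rw [List.map_cons, List.pairwise_cons] at hl
    rcases List.mem_cons.1 hmem with rfl | hmem'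
    · rw [lsum_cons, mul_add, mul_smul_comm, chi_mul, inf_idem,
        chi_mul_lsum_eq_zero (fun q hq => hl.1 q.2 (List.mem_map_of_mem (f := Prod.snd) hq)),
        add_zero]
    · rw [lsum_cons, mul_add, mul_smul_comm, chi_mul]
      have hpx : p.2 ⊓ x = ⊥ := hl.1 x (List.mem_map_of_mem (f := Prod.snd) hmem')
      rw [inf_comm] at hpx
      rw [hpx, chi_bot, smul_zero, zero_add, ih hl.2 hmem']

lemma lsum_eval_zero {l : List (ℂ × B)} {φ : BoolCharSpace B}
    (h : ∀ p ∈ l, φ.1 p.2 = false) : lsum l φ = 0 := by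
  induction l with
  | nil => rfl
  | cons p t ih =>
    rw [lsum_cons]
    have : (p.1 • chi p.2 + lsum t) φ = p.1 • (chi p.2 φ) + lsum t φ := rfl
    rw [this, ih (fun q hq => h q (List.mem_cons_of_mem p hq)), chi_apply,
      h p List.mem_cons_self]
    simp

lemma norm_lsum_le {l : List (ℂ × B)} {ε : ℝ} (hε : 0 ≤ ε)
    (hl : (l.map Prod.snd).Pairwise (fun x y => x ⊓ y = ⊥))
    (hc : ∀ p ∈ l, ‖p.1‖ ≤ ε) : ‖lsum l‖ ≤ ε := by
  rw [← ZeroAtInftyContinuousMap.norm_toBCF_eq_norm]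
  refine (BoundedContinuousFunction.norm_le hε).2 fun φ => ?_
  show ‖lsum l φ‖ ≤ ε
  induction l with
  | nil =>
    have h0 : lsum ([] : List (ℂ × B)) φ = 0 := rfl
    rw [h0]; simpa using hε
  | cons p t ih =>
    rw [List.map_cons, List.pairwise_cons] at hl
    have heval : lsum (p :: t) φ = p.1 • (chi p.2 φ) + lsum t φ := by rw [lsum_cons]; rfl
    by_cases hp : φ.1 p.2 = true
    · have hz : lsum t φ = 0 := by
        refine lsum_eval_zero fun q hq => ?_
        have hdq : p.2 ⊓ q.2 = ⊥ := hl.1 q.2 (List.mem_map_of_mem (f := Prod.snd) hq)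
        have := φ.2.1 p.2 q.2
        rw [hdq, φ.2.2.2.2.1, hp] at this
        simpa using this.symm
      rw [heval, hz, add_zero, chi_apply, hp]
      simpa using hc p List.mem_cons_self
    · have hp' : φ.1 p.2 = false := by simpa using hp
      rw [heval, chi_apply, hp']
      simpa using ih hl.2 (fun q hq => hc q (List.mem_cons_of_mem p hq))

/-! ### Disjointification -/

lemma lsum_append (a b : List (ℂ × B)) : lsum (a ++ b) = lsum a + lsum b := by
  simp [lsum]

lemma lsum_split_inf (l : List (ℂ × B)) (A : B) :
    lsum l = lsum (l.map fun p => (p.1, p.2 ⊓ A)) + lsum (l.map fun p => (p.1, p.2 \ A)) := by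
  induction l with
  | nil => simp [lsum_nil]
  | cons p t ih =>
    simp only [List.map_cons, lsum_cons]
    rw [ih, chi_split p.2 A]
    module

lemma lsum_shift_coeff (l : List (ℂ × B)) (c : ℂ) (A : B) :
    lsum (l.map fun p => (p.1 + c, p.2 ⊓ A)) =
      lsum (l.map fun p => (p.1, p.2 ⊓ A)) + c • (l.map fun p => chi (p.2 ⊓ A)).sum := by
  induction l with
  | nil => simp [lsum_nil]
  | cons p t ih =>
    simp only [List.map_cons, lsum_cons, List.sum_cons]
    rw [ih]
    module

lemma chi_inf_foldr {ks : List B} (hks : ks.Pairwise fun x y => x ⊓ y = ⊥) (A : B) :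
    chi (A ⊓ ks.foldr (· ⊔ ·) ⊥) = (ks.map fun x => chi (x ⊓ A)).sum := by
  induction ks with
  | nil => simpa using chi_bot
  | cons x t ih =>
    rw [List.pairwise_cons] at hks
    rw [List.foldr_cons, inf_sup_left, chi_add_disjoint ?hd, List.map_cons, List.sum_cons,
      ih hks.2, inf_comm A x]
    case hd =>
      have h1 : A ⊓ x ⊓ (A ⊓ List.foldr (· ⊔ ·) ⊥ t) ≤ x ⊓ List.foldr (· ⊔ ·) ⊥ t :=
        inf_le_inf inf_le_right inf_le_right
      rw [inf_foldr_bot hks.1] at h1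
      exact le_bot_iff.1 h1

lemma insert_rep {l : List (ℂ × B)} (hl : (l.map Prod.snd).Pairwise fun x y => x ⊓ y = ⊥)
    (c : ℂ) (A : B) :
    ∃ l' : List (ℂ × B), (l'.map Prod.snd).Pairwise (fun x y => x ⊓ y = ⊥) ∧
      lsum l' = c • chi A + lsum l := by
  classical
  set s : B := (l.map Prod.snd).foldr (· ⊔ ·) ⊥ with hs
  refine ⟨(l.map fun p => (p.1 + c, p.2 ⊓ A)) ++ ((l.map fun p => (p.1, p.2 \ A)) ++
    [(c, A \ s)]), ?_, ?_⟩
  · -- pairwise disjointness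
    have hmapsnd1 : ((l.map fun p => (p.1 + c, p.2 ⊓ A)).map Prod.snd) =
        (l.map Prod.snd).map (fun x => x ⊓ A) := by simp [List.map_map]
    have hmapsnd2 : ((l.map fun p => (p.1, p.2 \ A)).map Prod.snd) =
        (l.map Prod.snd).map (fun x => x \ A) := by simp [List.map_map]
    rw [List.map_append, List.map_append, hmapsnd1, hmapsnd2, List.pairwise_append]
    refine ⟨?_, ?_, ?_⟩
    · refine List.Pairwise.map _ (fun x y h => ?_) hl
      have h1 : x ⊓ A ⊓ (y ⊓ A) ≤ x ⊓ y := inf_le_inf inf_le_left inf_le_left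
      rw [h] at h1; exact le_bot_iff.1 h1
    · rw [List.pairwise_append]
      refine ⟨?_, by simp, ?_⟩
      · refine List.Pairwise.map _ (fun x y h => ?_) hl
        have h1 : x \ A ⊓ (y \ A) ≤ x ⊓ y := inf_le_inf sdiff_le sdiff_le
        rw [h] at h1; exact le_bot_iff.1 h1
      · rintro a ha b hb
        have hb' : b = A \ s := by simpa using hb
        subst hb'
        obtain ⟨x, hx, rfl⟩ := List.mem_map.1 ha
        have h1 : x \ A ⊓ A \ s ≤ s ⊓ (A \ s) :=
          inf_le_inf (sdiff_le.trans (le_foldr_sup hx)) le_rfl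
        rw [inf_sdiff_self_right] at h1; exact le_bot_iff.1 h1
    · rintro a ha b hb
      obtain ⟨x, hx, rfl⟩ := List.mem_map.1 ha
      rcases List.mem_append.1 hb with hb | hb
      · obtain ⟨y, hy, rfl⟩ := List.mem_map.1 hb
        have h1 : x ⊓ A ⊓ (y \ A) ≤ A ⊓ (y \ A) := inf_le_inf inf_le_right le_rfl
        rw [inf_sdiff_self_right] at h1; exact le_bot_iff.1 h1
      · have hb' : b = A \ s := by simpa using hb
        subst hb'
        have h1 : x ⊓ A ⊓ (A \ s) ≤ s ⊓ (A \ s) :=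
          inf_le_inf (inf_le_left.trans (le_foldr_sup hx)) le_rfl
        rw [inf_sdiff_self_right] at h1; exact le_bot_iff.1 h1
  · -- sum identity
    have hAsplit : chi A = chi (A ⊓ s) + chi (A \ s) := chi_split A s
    have hF3 : chi (A ⊓ s) = (l.map fun p => chi (p.2 ⊓ A)).sum := by
      rw [hs, chi_inf_foldr hl A, List.map_map]; rfl
    have hsingle : lsum [(c, A \ s)] = c • chi (A \ s) := by
      rw [lsum_cons, lsum_nil, add_zero]
    rw [lsum_append, lsum_append, hsingle, lsum_shift_coeff, ← hF3,
      hAsplit, lsum_split_inf l A]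
    module

lemma exists_disjoint_rep {g : C₀(BoolCharSpace B, ℂ)}
    (hg : g ∈ Submodule.span ℂ (Set.range (chi (B := B)))) :
    ∃ l : List (ℂ × B), (l.map Prod.snd).Pairwise (fun x y => x ⊓ y = ⊥) ∧ g = lsum l := by
  classical
  obtain ⟨n, f, v, hsum⟩ := Submodule.mem_span_set'.1 hg
  -- replace each v i by an element of B
  have hv : ∀ i : Fin n, ∃ A : B, chi A = (v i : C₀(BoolCharSpace B, ℂ)) := fun i => (v i).2
  choose w hw using hv
  subst hsum
  -- induct on n
  clear hg
  induction n with
  | zero => exact ⟨[], by simp, by simp [lsum_nil]⟩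
  | succ m ih =>
    obtain ⟨l, hl, hleq⟩ := ih (fun i => f i.succ) (fun i => v i.succ) (fun i => w i.succ)
      (fun i => hw i.succ)
    obtain ⟨l', hl', hleq'⟩ := insert_rep hl (f 0) (w 0)
    refine ⟨l', hl', ?_⟩
    rw [Fin.sum_univ_succ, hleq', ← hleq, hw 0]

/-! ### The ideal-theoretic lemmas -/

lemma chi_mem_A (A : B) : chi A ∈ boolAlgebraOfChars B :=
  subset_closure (Submodule.subset_span ⟨A, rfl⟩)

lemma A_eq_coe : boolAlgebraOfChars B =
    ((Submodule.span ℂ (Set.range (chi (B := B)))).topologicalClosure :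
      Set C₀(BoolCharSpace B, ℂ)) :=
  (Submodule.topologicalClosure_coe _).symm

lemma A_sub_mem {f g : C₀(BoolCharSpace B, ℂ)} (hf : f ∈ boolAlgebraOfChars B)
    (hg : g ∈ boolAlgebraOfChars B) : f - g ∈ boolAlgebraOfChars B := by
  rw [A_eq_coe] at *
  exact Submodule.sub_mem _ hf hg

lemma A_smul_mem (c : ℂ) {f : C₀(BoolCharSpace B, ℂ)} (hf : f ∈ boolAlgebraOfChars B) :
    c • f ∈ boolAlgebraOfChars B := by
  rw [A_eq_coe] at *
  exact Submodule.smul_mem _ c hf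

set_option synthInstance.maxHeartbeats 800000 in
lemma idem_mem_ideal {K : Set C₀(BoolCharSpace B, ℂ)} (hK : IsClosedIdealOfA K)
    {e d : C₀(BoolCharSpace B, ℂ)} (hd : d ∈ boolAlgebraOfChars B)
    (hde : d * e = d) (hed : e - d ∈ K) (hnorm : ‖d‖ < 1) : e ∈ K := by
  obtain ⟨hsub, hcl, h0, hadd, hsmul, hmul⟩ := hK
  set p : ℕ → C₀(BoolCharSpace B, ℂ) := fun n => Nat.rec e (fun _ ih => d * ih) n with hp
  have hp0 : p 0 = e := rfl
  have hpS : ∀ n, p (n + 1) = d * p n := fun n => rfl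
  have hmem : ∀ n, e - p n ∈ K := by
    intro n
    induction n with
    | zero => rw [hp0, sub_self]; exact h0
    | succ m ih =>
      have hid : e - p (m + 1) = (e - d) + d * (e - p m) := by
        rw [hpS m, mul_sub, hde]; abel
      rw [hid]
      exact hadd _ hed _ ((hmul _ ih d hd).2)
  have hnorm' : ∀ n, ‖p n‖ ≤ ‖d‖ ^ n * ‖e‖ := by
    intro n
    induction n with
    | zero => simp [hp0]
    | succ m ih =>
      calc ‖p (m + 1)‖ = ‖d * p m‖ := by rw [hpS m]
        _ ≤ ‖d‖ * ‖p m‖ := norm_mul_le d (p m)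
        _ ≤ ‖d‖ * (‖d‖ ^ m * ‖e‖) := by
            exact mul_le_mul_of_nonneg_left ih (norm_nonneg d)
        _ = ‖d‖ ^ (m + 1) * ‖e‖ := by ring
  have hlim : Filter.Tendsto (fun n => e - p n) atTop (𝓝 e) := by
    have h1 : Filter.Tendsto (fun n => ‖d‖ ^ n * ‖e‖) atTop (𝓝 0) := by
      simpa using
        (tendsto_pow_atTop_nhds_zero_of_lt_one (norm_nonneg d) hnorm).mul_const ‖e‖
    have h2 : Filter.Tendsto p atTop (𝓝 0) := squeeze_zero_norm hnorm' h1
    have h3 : Filter.Tendsto (fun n => e - p n) atTop (𝓝 (e - 0)) :=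
      Filter.Tendsto.sub
        (tendsto_const_nhds : Filter.Tendsto (fun _ : ℕ => e) atTop (𝓝 e)) h2
    simpa using h3
  exact hcl.mem_of_tendsto hlim (Filter.Eventually.of_forall hmem)

lemma key_mem {K : Set C₀(BoolCharSpace B, ℂ)} (hK : IsClosedIdealOfA K)
    {f g : C₀(BoolCharSpace B, ℂ)} (hf : f ∈ K) {c : ℂ} {x : B}
    (hfg : ‖f - g‖ < ‖c‖) (hg : chi x * g = c • chi x) : chi x ∈ K := by
  have hcpos : 0 < ‖c‖ := lt_of_le_of_lt (norm_nonneg _) hfg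
  have hc : c ≠ 0 := norm_pos_iff.1 hcpos
  set e : C₀(BoolCharSpace B, ℂ) := chi x with he
  set k : C₀(BoolCharSpace B, ℂ) := e * f with hk
  have hkK : k ∈ K := (hK.2.2.2.2.2 f hf e (chi_mem_A x)).2
  have hee : e * e = e := by rw [he, chi_mul, inf_idem]
  set d : C₀(BoolCharSpace B, ℂ) := e - c⁻¹ • k with hd
  have hdA : d ∈ boolAlgebraOfChars B :=
    A_sub_mem (chi_mem_A x) (A_smul_mem c⁻¹ (hK.1 hkK))
  have hde : d * e = d := by
    rw [hd, sub_mul, smul_mul_assoc, hk, mul_comm (e * f) e, ← mul_assoc, hee]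
  have hed : e - d ∈ K := by
    rw [hd, sub_sub_cancel]
    exact hK.2.2.2.2.1 c⁻¹ k hkK
  have hdnorm : ‖d‖ < 1 := by
    have hdeq : d = c⁻¹ • (c • e - k) := by
      have h1 : c⁻¹ • (c • e - k) = c⁻¹ • (c • e) - c⁻¹ • k := smul_sub c⁻¹ (c • e) k
      have h2 : c⁻¹ • (c • e) = e := inv_smul_smul₀ hc e
      rw [hd, h1, h2]
    have hval : c • e - k = e * (g - f) := by
      rw [mul_sub, ← hg, hk]
    have hnormval : ‖c • e - k‖ ≤ ‖f - g‖ := by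
      rw [hval]
      calc ‖e * (g - f)‖ ≤ ‖e‖ * ‖g - f‖ := norm_mul_le _ _
        _ ≤ 1 * ‖g - f‖ := mul_le_mul_of_nonneg_right (norm_chi_le x) (norm_nonneg _)
        _ = ‖f - g‖ := by rw [one_mul, norm_sub_rev]
    have h3 : ‖c⁻¹ • (c • e - k)‖ = ‖c⁻¹‖ * ‖c • e - k‖ := norm_smul c⁻¹ (c • e - k)
    calc ‖d‖ = ‖c‖⁻¹ * ‖c • e - k‖ := by rw [hdeq, h3, norm_inv]
      _ ≤ ‖c‖⁻¹ * ‖f - g‖ := mul_le_mul_of_nonneg_left hnormval (by positivity)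
      _ < ‖c‖⁻¹ * ‖c‖ := by
          exact (mul_lt_mul_iff_right₀ (by positivity)).2 hfg
      _ = 1 := inv_mul_cancel₀ (ne_of_gt hcpos)
  exact idem_mem_ideal hK hdA hde hed hdnorm

lemma lsum_mem_span {J' : Set B} {l : List (ℂ × B)} (h : ∀ p ∈ l, p.2 ∈ J') :
    lsum l ∈ Submodule.span ℂ (chi '' J') := by
  induction l with
  | nil => rw [lsum_nil]; exact Submodule.zero_mem _
  | cons p t ih =>
    rw [lsum_cons]
    exact Submodule.add_mem _
      (Submodule.smul_mem _ _ (Submodule.subset_span ⟨p.2, h p List.mem_cons_self, rfl⟩))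
      (ih fun q hq => h q (List.mem_cons_of_mem p hq))

lemma lsum_filter_split (l : List (ℂ × B)) (P : ℂ × B → Bool) :
    lsum l = lsum (l.filter P) + lsum (l.filter fun p => !P p) := by
  induction l with
  | nil => simp [lsum_nil]
  | cons p t ih =>
    by_cases hP : P p
    · rw [List.filter_cons_of_pos hP, List.filter_cons_of_neg (by simp [hP]),
        lsum_cons, lsum_cons, ih]
      abel
    · rw [List.filter_cons_of_neg (by simpa using hP),
        List.filter_cons_of_pos (by simpa using hP), lsum_cons, lsum_cons, ih]
      abel

end Lemmas

/-- The map 𝓙 ↦ K_𝓙 = closed span{χ_A : A ∈ 𝓙} is a bijection between the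
ideals of the Boolean algebra 𝓑 and the closed ideals of 𝓐(𝓑), with inverse
K ↦ 𝓙_K = {A ∈ 𝓑 : χ_A ∈ K}. -/
theorem ideal_bijection {B : Type*} [GeneralizedBooleanAlgebra B] :
    (∀ J : Set B, BoolIdeal J →
      IsClosedIdealOfA (closure (Submodule.span ℂ (chi '' J) : Set C₀(BoolCharSpace B, ℂ))) ∧
      {A : B | chi A ∈ closure (Submodule.span ℂ (chi '' J)
        : Set C₀(BoolCharSpace B, ℂ))} = J) ∧
    (∀ K : Set C₀(BoolCharSpace B, ℂ), IsClosedIdealOfA K →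
      BoolIdeal {A : B | chi A ∈ K} ∧
      closure (Submodule.span ℂ (chi '' {A : B | chi A ∈ K})
        : Set C₀(BoolCharSpace B, ℂ)) = K) := by
  classical
  have hmulJ : ∀ {J : Set B}, BoolIdeal J → ∀ {f g : C₀(BoolCharSpace B, ℂ)},
      f ∈ closure (Submodule.span ℂ (chi '' J) : Set C₀(BoolCharSpace B, ℂ)) →
      g ∈ boolAlgebraOfChars B →
      f * g ∈ closure (Submodule.span ℂ (chi '' J) : Set C₀(BoolCharSpace B, ℂ)) := by
    intro J hJ f g hf hg
    rw [boolAlgebraOfChars_eq] at hg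
    exact mul_mem_closure_span (fun A hA C _ => hJ.2.2 A hA C) hf hg
  constructor
  · -- forward direction
    intro J hJ
    constructor
    · refine ⟨?_, isClosed_closure, subset_closure (Submodule.zero_mem _), ?_, ?_, ?_⟩
      · exact closure_mono (SetLike.coe_subset_coe.2
          (Submodule.span_mono (Set.image_subset_range chi J)))
      · intro f hf g hg
        rw [closure_span_eq_topClosure] at hf hg ⊢
        exact Submodule.add_mem _ hf hg
      · intro c f hf
        rw [closure_span_eq_topClosure] at hf ⊢
        exact Submodule.smul_mem _ c hf
      · intro f hf g hg
        refine ⟨hmulJ hJ hf hg, ?_⟩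
        rw [mul_comm]
        exact hmulJ hJ hf hg
    · ext A
      simp only [Set.mem_setOf_eq]
      constructor
      · intro h
        by_contra hA
        exact chi_not_mem_closure_span hJ hA h
      · intro hA
        exact subset_closure (Submodule.subset_span ⟨A, hA, rfl⟩)
  · -- reverse direction
    intro K hK
    have hJ' : BoolIdeal {A : B | chi A ∈ K} := by
      refine ⟨⟨⊥, ?_⟩, ?_, ?_⟩
      · show chi (⊥ : B) ∈ K
        rw [chi_bot]
        exact hK.2.2.1
      · intro a ha b hb
        show chi (a ⊔ b) ∈ K
        have hinf : chi (a ⊓ b) ∈ K := by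
          rw [← chi_mul]
          exact (hK.2.2.2.2.2 (chi a) ha (chi b) (chi_mem_A b)).1
        have heq : chi (a ⊔ b) = (chi a + chi b) + (-1 : ℂ) • chi (a ⊓ b) := by
          have h1 : (-1 : ℂ) • chi (a ⊓ b) = -(chi (a ⊓ b)) := neg_one_smul ℂ (chi (a ⊓ b))
          rw [chi_sup, h1, ← sub_eq_add_neg]
        rw [heq]
        exact hK.2.2.2.1 _ (hK.2.2.2.1 _ ha _ hb) _ (hK.2.2.2.2.1 (-1) _ hinf)
      · intro a ha b
        show chi (a ⊓ b) ∈ K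
        rw [← chi_mul]
        exact (hK.2.2.2.2.2 (chi a) ha (chi b) (chi_mem_A b)).1
    refine ⟨hJ', Set.Subset.antisymm ?_ ?_⟩
    · -- closure span ⊆ K
      refine closure_minimal ?_ hK.2.1
      intro x hx
      refine Submodule.span_induction ?_ ?_ ?_ ?_ hx
      · rintro _ ⟨A, hA, rfl⟩
        exact hA
      · exact hK.2.2.1
      · exact fun u v _ _ hu hv => hK.2.2.2.1 u hu v hv
      · exact fun c u _ hu => hK.2.2.2.2.1 c u hu
    · -- K ⊆ closure span
      intro f hf
      rw [Metric.mem_closure_iff]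
      intro ε hε
      set δ : ℝ := ε / 3 with hδ
      have hδpos : 0 < δ := by positivity
      obtain ⟨g, hgspan, hdistfg⟩ := Metric.mem_closure_iff.1 (hK.1 hf) δ hδpos
      obtain ⟨l, hlpair, rfl⟩ := exists_disjoint_rep hgspan
      set P : ℂ × B → Bool := fun p => decide (δ < ‖p.1‖) with hP
      have hsplit : lsum l = lsum (l.filter P) + lsum (l.filter fun p => !P p) :=
        lsum_filter_split l P
      have hpair1 : ((l.filter P).map Prod.snd).Pairwise (fun x y => x ⊓ y = ⊥) :=
        hlpair.sublist ((List.filter_sublist (p := P) (l := l)).map Prod.snd)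
      have hpair2 : ((l.filter fun p => !P p).map Prod.snd).Pairwise (fun x y => x ⊓ y = ⊥) :=
        hlpair.sublist ((List.filter_sublist (p := fun p => !P p) (l := l)).map Prod.snd)
      have hl2 : ‖lsum (l.filter fun p => !P p)‖ ≤ δ := by
        refine norm_lsum_le hδpos.le hpair2 fun p hp => ?_
        have h1 := List.of_mem_filter hp
        simp only [hP, Bool.not_eq_true', decide_eq_false_iff_not, not_lt] at h1
        exact h1
      have hmemJ' : ∀ p ∈ l.filter P, p.2 ∈ {A : B | chi A ∈ K} := by
        intro p hp
        have hpl : p ∈ l := List.mem_of_mem_filter hp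
        have hc : δ < ‖p.1‖ := by
          have h1 := List.of_mem_filter hp
          simpa [hP] using h1
        show chi p.2 ∈ K
        have hfg : ‖f - lsum l‖ < ‖p.1‖ := by
          rw [← dist_eq_norm]
          exact hdistfg.trans hc
        refine key_mem hK hf hfg ?_
        exact chi_mul_lsum hlpair (by simpa using hpl)
      refine ⟨lsum (l.filter P), lsum_mem_span hmemJ', ?_⟩
      calc dist f (lsum (l.filter P))
          ≤ dist f (lsum l) + dist (lsum l) (lsum (l.filter P)) := dist_triangle _ _ _
        _ < δ + δ := by
            refine add_lt_add_of_lt_of_le hdistfg ?_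
            rw [dist_eq_norm, hsplit]
            simpa using hl2
        _ < ε := by rw [hδ]; linarith
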